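/- Let G be a graph on vertices g_1,…,g_n with m edges, let G' be an isomorphic copy of G on vertices g'_1,…,g'_n, and let H be the graph on vertex set {(g_i, g'_j) : 1 ≤ i, j ≤ n} whose edges are, for each edge {g_i,g_j} of G, the two edges {(g_i,g'_i),(g_j,g'_j)} and {(g_i,g'_j),(g_j,g'_i)}. Then H is a spanning, cross-like subgraph of K_n ⊗ K_n, and the connected components of H are one copy of G, m copies of K₂, and n² − n − 2m copies of K₁; that is, H ≅ G ∪ mK₂ ∪ (n² − n − 2m)K₁. -/

import Mathlib

open SimpleGraph

variable {α β : Type*}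

/-- The tensor (categorical / direct) product of two simple graphs:
`(g,h)` and `(g',h')` are adjacent iff `g ~ g'` in `G` and `h ~ h'` in `H`. -/
def tensorProd (G : SimpleGraph α) (H : SimpleGraph β) : SimpleGraph (α × β) where
  Adj x y := G.Adj x.1 y.1 ∧ H.Adj x.2 y.2
  symm := ⟨fun _ _ h => ⟨h.1.symm, h.2.symm⟩⟩
  loopless := ⟨fun x h => G.loopless.irrefl x.1 h.1⟩

infixl:70 " ⊗t " => tensorProd

@[simp] lemma tensorProd_adj (G : SimpleGraph α) (H : SimpleGraph β) (x y : α × β) :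
    (G ⊗t H).Adj x y ↔ G.Adj x.1 y.1 ∧ H.Adj x.2 y.2 := Iff.rfl

/-- The 2-sum (sum modulo 2) of two graphs on a common vertex set: the edge set is
the symmetric difference of the two edge sets. -/
def twoSum (G H : SimpleGraph α) : SimpleGraph α where
  Adj u v := (G.Adj u v ∧ ¬ H.Adj u v) ∨ (H.Adj u v ∧ ¬ G.Adj u v)
  symm := ⟨fun u v h => h.imp (fun h' => ⟨h'.1.symm, fun hh => h'.2 hh.symm⟩)
    (fun h' => ⟨h'.1.symm, fun hh => h'.2 hh.symm⟩)⟩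
  loopless := ⟨fun u h => h.elim (fun h' => G.loopless.irrefl u h'.1) (fun h' => H.loopless.irrefl u h'.1)⟩

@[simp] lemma twoSum_adj (G H : SimpleGraph α) (u v : α) :
    (twoSum G H).Adj u v ↔ (G.Adj u v ∧ ¬ H.Adj u v) ∨ (H.Adj u v ∧ ¬ G.Adj u v) := Iff.rfl

/-- The iterated 2-sum `⊕_{k=1}^l F k` (`⊥`, the empty graph, is the neutral element). -/
def twoSumMany {l : ℕ} (F : Fin l → SimpleGraph α) : SimpleGraph α :=
  (List.ofFn F).foldr twoSum ⊥

/-- `K ∈ 𝒦(p,q)`: `K` is a 2-sum `⊕_{k=1}^l (G_k ⊗ H_k)` of tensor products, where every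
`G_k` is a graph on `p` fixed vertices with at least one edge and every `H_k` is a graph on
`q` fixed vertices with at least one edge. -/
def MemK (p q : ℕ) (K : SimpleGraph (Fin p × Fin q)) : Prop :=
  ∃ (l : ℕ) (G : Fin l → SimpleGraph (Fin p)) (H : Fin l → SimpleGraph (Fin q)),
    0 < l ∧ (∀ k, ∃ a b, (G k).Adj a b) ∧ (∀ k, ∃ c d, (H k).Adj c d) ∧
    K = twoSumMany fun k => (G k) ⊗t (H k)

/-- A graph on `α × β` is cross-like if `(a,b) ~ (c,d)` implies `(a,d) ~ (c,b)`. -/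
def CrossLike (K : SimpleGraph (α × β)) : Prop :=
  ∀ a c : α, ∀ b d : β, K.Adj (a, b) (c, d) → K.Adj (a, d) (c, b)

/-- The graph with the single edge `{a,b}` (for `a ≠ b`). -/
def singleEdge (a b : α) : SimpleGraph α := fromEdgeSet {s(a, b)}

/-- The tensor-elementary graph `E(i,i';j,j')`: the tensor product of the single-edge
graph with edge `{g_i, g_{i'}}` and the single-edge graph with edge `{h_j, h_{j'}}`. -/
def tensorElem {p q : ℕ} (i i' : Fin p) (j j' : Fin q) : SimpleGraph (Fin p × Fin q) :=
  singleEdge i i' ⊗t singleEdge j j'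

/-- `m` disjoint copies of `K₂` (a single edge), on vertex set `Fin m × Bool`. -/
def copiesK2 (m : ℕ) : SimpleGraph (Fin m × Bool) where
  Adj x y := x.1 = y.1 ∧ x.2 ≠ y.2
  symm := ⟨fun x y h => ⟨h.1.symm, h.2.symm⟩⟩
  loopless := ⟨fun x h => h.2 rfl⟩

/-- The graph `H` on `{(g_i, g'_j) : 1 ≤ i, j ≤ n}` whose edges are, for each edge
`{g_i, g_j}` of `G`, the two edges `{(g_i,g'_i),(g_j,g'_j)}` and `{(g_i,g'_j),(g_j,g'_i)}`
(the second coordinate plays the role of the primed isomorphic copy `G'` of `G`). -/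
def crossGraph (G : SimpleGraph α) : SimpleGraph (α × α) where
  Adj x y := G.Adj x.1 y.1 ∧ ((x.2 = x.1 ∧ y.2 = y.1) ∨ (x.2 = y.1 ∧ y.2 = x.1))
  symm := ⟨fun x y h => ⟨h.1.symm, h.2.imp (fun e => ⟨e.2, e.1⟩) (fun e => ⟨e.2, e.1⟩)⟩⟩
  loopless := ⟨fun x h => G.loopless.irrefl x.1 h.1⟩


@[simp] lemma copiesK2_adj (m : ℕ) (x y : Fin m × Bool) :
    (copiesK2 m).Adj x y ↔ x.1 = y.1 ∧ x.2 ≠ y.2 := Iff.rfl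

@[simp] lemma crossGraph_adj (G : SimpleGraph α) (x y : α × α) :
    (crossGraph G).Adj x y ↔
      G.Adj x.1 y.1 ∧ ((x.2 = x.1 ∧ y.2 = y.1) ∨ (x.2 = y.1 ∧ y.2 = x.1)) := Iff.rfl

/-- Let `G` be a graph on `n` vertices with `m` edges and let `H` be the graph on
`Fin n × Fin n` with edges `{(g_i,g'_i),(g_j,g'_j)}` and `{(g_i,g'_j),(g_j,g'_i)}` for each
edge `{g_i,g_j}` of `G`. Then `H` is a spanning, cross-like subgraph of `K_n ⊗ K_n`, and
`H ≅ G ∪ mK₂ ∪ (n² − n − 2m)K₁`. -/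
theorem crossGraph_spec (n : ℕ) (G : SimpleGraph (Fin n)) [Fintype G.edgeSet] :
    crossGraph G ≤ (⊤ : SimpleGraph (Fin n)) ⊗t (⊤ : SimpleGraph (Fin n)) ∧
    CrossLike (crossGraph G) ∧
    Nonempty
      (crossGraph G ≃g
        ((G ⊕g copiesK2 G.edgeFinset.card) ⊕g
          (⊥ : SimpleGraph (Fin (n ^ 2 - n - 2 * G.edgeFinset.card))))) := by
  
  classical
  refine ⟨?_, ?_, ?_⟩
  · rintro ⟨x1, x2⟩ ⟨y1, y2⟩ ⟨hadj, h | h⟩ <;> dsimp only at h hadj ⊢ <;>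
      obtain ⟨h1, h2⟩ := h <;> subst h1 <;> subst h2 <;>
      simp only [tensorProd_adj, top_adj]
    · exact ⟨hadj.ne, hadj.ne⟩
    · exact ⟨hadj.ne, hadj.ne'⟩
  · rintro a c b d ⟨hadj, h | h⟩
    · exact ⟨hadj, Or.inr ⟨h.2, h.1⟩⟩
    · exact ⟨hadj, Or.inl ⟨h.2, h.1⟩⟩
  · set m := G.edgeFinset.card with hm
    set N := n ^ 2 - n - 2 * m with hN
    -- cardinality of the adjacency subtype
    have cardAdj : Fintype.card {x : Fin n × Fin n // G.Adj x.1 x.2} = 2 * m := by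
      have e : {x : Fin n × Fin n // G.Adj x.1 x.2} ≃ G.Dart :=
        { toFun := fun x => ⟨x.1, x.2⟩
          invFun := fun d => ⟨d.toProd, d.adj⟩
          left_inv := fun x => rfl
          right_inv := fun d => rfl }
      rw [Fintype.card_congr e]
      convert G.dart_card_eq_twice_card_edges
    have cardDiag : Fintype.card {x : Fin n × Fin n // x.1 = x.2} = n := by
      have e : {x : Fin n × Fin n // x.1 = x.2} ≃ Fin n :=
        { toFun := fun x => x.1.1
          invFun := fun i => ⟨(i, i), rfl⟩
          left_inv := fun x => by
            obtain ⟨⟨a, b⟩, h⟩ := x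
            simp only at h
            subst h
            rfl
          right_inv := fun i => rfl }
      rw [Fintype.card_congr e, Fintype.card_fin]
    have hdisj : Disjoint (fun x : Fin n × Fin n => x.1 = x.2)
        (fun x : Fin n × Fin n => G.Adj x.1 x.2) := by
      intro r h1 h2 x hx
      exact absurd (h1 x hx) (h2 x hx).ne
    have cardOr : Fintype.card {x : Fin n × Fin n // x.1 = x.2 ∨ G.Adj x.1 x.2}
        = n + 2 * m := by
      rw [Fintype.card_subtype_or_disjoint _ _ hdisj, cardDiag, cardAdj]
    have cardTot : Fintype.card (Fin n × Fin n) = n ^ 2 := by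
      simp [sq]
    have hle : n + 2 * m ≤ n ^ 2 := by
      rw [← cardOr, ← cardTot]
      exact Fintype.card_subtype_le _
    have cardIso : Fintype.card
        {x : Fin n × Fin n // ¬(x.1 = x.2 ∨ G.Adj x.1 x.2)} = N := by
      rw [Fintype.card_subtype_compl, cardOr, cardTot, hN]
      omega
    have ecard : Fintype.card G.edgeFinset = m := by
      rw [hm]; exact Fintype.card_coe _
    let e : G.edgeFinset ≃ Fin m := Fintype.equivFinOfCardEq ecard
    let g : {x : Fin n × Fin n // ¬(x.1 = x.2 ∨ G.Adj x.1 x.2)} ≃ Fin N :=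
      Fintype.equivFinOfCardEq cardIso
    let f : Fin n × Fin n → (Fin n ⊕ Fin m × Bool) ⊕ Fin N := fun x =>
      if h : x.1 = x.2 then .inl (.inl x.1)
      else if h2 : G.Adj x.1 x.2 then
        .inl (.inr (e ⟨s(x.1, x.2), by simpa using h2⟩, decide (x.1 < x.2)))
      else .inr (g ⟨x, by tauto⟩)
    have decne : ∀ a b : Fin n, a ≠ b → decide (a < b) ≠ decide (b < a) := by
      intro a b hab h
      rw [decide_eq_decide] at h
      rcases lt_or_gt_of_ne hab with h' | h'
      · exact absurd (h.mp h') (lt_asymm h')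
      · exact absurd (h.mpr h') (lt_asymm h')
    have hinj : Function.Injective f := by
      rintro ⟨x1, x2⟩ ⟨y1, y2⟩ hxy
      simp only [f] at hxy
      split_ifs at hxy with h1 h2 h3 h4 h5 h6 h7 h8
      all_goals try exact Sum.noConfusion hxy
      all_goals try exact Sum.noConfusion hxy fun h => Sum.noConfusion h
      all_goals try (simp at hxy; done)
      -- diag/diag
      · simp only [Sum.inl.injEq] at hxy
        subst h1; subst h2; subst hxy; rfl
      -- adj/adj
      · simp only [Sum.inl.injEq, Sum.inr.injEq, Prod.mk.injEq] at hxy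
        obtain ⟨hse, hb⟩ := hxy
        have hs := Subtype.ext_iff.mp (e.injective hse)
        rw [Sym2.eq_iff] at hs
        rcases hs with ⟨ha, hb'⟩ | ⟨ha, hb'⟩
        · subst ha; subst hb'; rfl
        · subst ha; subst hb'
          exact absurd hb (decne _ _ h1)
      -- iso/iso
      · simp only [Sum.inr.injEq] at hxy
        exact Subtype.ext_iff.mp (g.injective hxy)
    have hcard : Fintype.card (Fin n × Fin n)
        = Fintype.card ((Fin n ⊕ Fin m × Bool) ⊕ Fin N) := by
      simp only [Fintype.card_sum, Fintype.card_prod, Fintype.card_fin,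
        Fintype.card_bool, cardTot]
      omega
    have hbij : Function.Bijective f :=
      (Fintype.bijective_iff_injective_and_card f).mpr ⟨hinj, hcard⟩
    refine ⟨⟨Equiv.ofBijective f hbij, ?_⟩⟩
    rintro ⟨x1, x2⟩ ⟨y1, y2⟩
    show (_ ⊕g _).Adj (f (x1, x2)) (f (y1, y2)) ↔ _
    simp only [f, crossGraph_adj]
    split_ifs with h1 h2 h3 h4 h5 h6 h7 h8
    -- diag / diag
    · subst h1; subst h2
      simp
    -- diag / adj
    · refine iff_of_false (by simp) ?_
      rintro ⟨hadj, ⟨ha, hb⟩ | ⟨ha, hb⟩⟩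
      · exact h2 hb.symm
      · exact h2 (by rw [← ha, ← h1, hb])
    -- diag / iso
    · refine iff_of_false (by simp) ?_
      rintro ⟨hadj, ⟨ha, hb⟩ | ⟨ha, hb⟩⟩
      · exact h2 hb.symm
      · exact h2 (by rw [← ha, ← h1, hb])
    -- adj / diag
    · refine iff_of_false (by simp) ?_
      rintro ⟨hadj, ⟨ha, hb⟩ | ⟨ha, hb⟩⟩
      · exact h1 ha.symm
      · exact h1 (by rw [ha, h5, hb])
    -- adj / adj
    · simp only [SimpleGraph.sum_adj, copiesK2_adj]
      constructor
      · rintro ⟨hse, hb⟩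
        have hs := Subtype.ext_iff.mp (e.injective hse)
        rw [Sym2.eq_iff] at hs
        rcases hs with ⟨ha, hb'⟩ | ⟨ha, hb'⟩
        · subst ha; subst hb'; exact absurd rfl hb
        · subst ha; subst hb'
          exact ⟨h4, Or.inr ⟨rfl, rfl⟩⟩
      · rintro ⟨hadj, ⟨ha, hb⟩ | ⟨ha, hb⟩⟩
        · exact absurd ha.symm h1
        · subst ha; subst hb
          exact ⟨congrArg e (Subtype.ext Sym2.eq_swap.symm), decne _ _ h1⟩
    -- adj / iso
    · refine iff_of_false (by simp) ?_
      rintro ⟨hadj, ⟨ha, hb⟩ | ⟨ha, hb⟩⟩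
      · exact h1 ha.symm
      · subst ha; subst hb
        exact h6 h4.symm
    -- iso / diag
    · refine iff_of_false (by simp) ?_
      rintro ⟨hadj, ⟨ha, hb⟩ | ⟨ha, hb⟩⟩
      · exact h1 ha.symm
      · subst ha; subst hb
        exact h4 hadj
    -- iso / adj
    · refine iff_of_false (by simp) ?_
      rintro ⟨hadj, ⟨ha, hb⟩ | ⟨ha, hb⟩⟩
      · exact h1 ha.symm
      · subst ha; subst hb
        exact h4 hadj
    -- iso / iso
    · refine iff_of_false (by simp) ?_
      rintro ⟨hadj, ⟨ha, hb⟩ | ⟨ha, hb⟩⟩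
      · exact h1 ha.symm
      · subst ha; subst hb
        exact h4 hadj
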